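/- Let α > 0 and β, Z̄ ≥ 0, and let {Zᵥ}_{ν≥0} be a sequence of continuous non-negative real-valued functions on [0,T] satisfying Z₀(τ) ≤ Z̄·e^{ατ} for all τ ∈ [0,T], and satisfying the recurrent integral inequality Zᵥ(τ) ≤ ∫₀^τ [α·Zᵥ(η) + β·Z_{ν−1}(η)] dη for all ν ≥ 1 and τ ∈ [0,T]. Then for every ν ≥ 1 and every τ ∈ [0,T], Zᵥ(τ) ≤ (βτ)^ν · e^{ατ} / ν! · Z̄. -/

import Mathlib

open Set Real MeasureTheory Topology

/-- Grönwall-type lemma: if a continuous `u` on `[0,T]` satisfies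
`u τ ≤ ∫₀^τ α u`, with `α > 0`, then `u ≤ 0` on `[0,T]`. -/
lemma gronwall_zero (T α : ℝ) (hα : 0 < α) (u : ℝ → ℝ)
    (hu : ContinuousOn u (Icc 0 T))
    (h : ∀ τ ∈ Icc 0 T, u τ ≤ ∫ η in (0:ℝ)..τ, α * u η) :
    ∀ τ ∈ Icc 0 T, u τ ≤ 0 := by
  intro τ hτ
  set f : ℝ → ℝ := fun η => α * u η with hfdef
  have hfc : ContinuousOn f (Icc 0 T) := continuousOn_const.mul hu
  have hint : ∀ x ∈ Icc 0 T, IntervalIntegrable f volume 0 x := by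
    intro x hx
    apply (hfc.mono ?_).intervalIntegrable
    rw [uIcc_of_le hx.1]
    exact Icc_subset_Icc le_rfl hx.2
  set F : ℝ → ℝ := fun x => ∫ η in (0:ℝ)..x, f η with hFdef
  have hFc : ContinuousOn F (Icc 0 T) := by
    have h1 := intervalIntegral.continuousOn_primitive (μ := volume) (f := f) (a := 0) (b := T)
      hfc.integrableOn_Icc
    apply h1.congr
    intro x hx
    simp only [hFdef]
    rw [intervalIntegral.integral_of_le hx.1]
  have hFderiv : ∀ x ∈ Ioo (0:ℝ) T, HasDerivAt F (f x) x := by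
    intro x hx
    have hca : ContinuousAt f x :=
      hfc.continuousAt (Icc_mem_nhds hx.1 hx.2)
    have hmeas : StronglyMeasurableAtFilter f (𝓝 x) volume :=
      ContinuousOn.stronglyMeasurableAtFilter isOpen_Ioo
        (hfc.mono Ioo_subset_Icc_self) x hx
    exact intervalIntegral.integral_hasDerivAt_right (hint x ⟨hx.1.le, hx.2.le⟩) hmeas hca
  set G : ℝ → ℝ := fun x => Real.exp (-α * x) * F x with hGdef
  have hGc : ContinuousOn G (Icc 0 T) :=
    ((Real.continuous_exp.comp (continuous_const.mul continuous_id)).continuousOn).mul hFc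
  have hGderiv : ∀ x ∈ Ioo (0:ℝ) T,
      HasDerivAt G (Real.exp (-α * x) * -α * F x + Real.exp (-α * x) * f x) x := by
    intro x hx
    have hb : HasDerivAt (fun y : ℝ => -α * y) (-α) x := by
      simpa using (hasDerivAt_id x).const_mul (-α)
    exact hb.exp.mul (hFderiv x hx)
  have hGanti : AntitoneOn G (Icc 0 T) := by
    apply antitoneOn_of_deriv_nonpos (convex_Icc 0 T) hGc
    · intro x hx
      rw [interior_Icc] at hx
      exact (hGderiv x hx).differentiableAt.differentiableWithinAt
    · intro x hx
      rw [interior_Icc] at hx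
      rw [(hGderiv x hx).deriv]
      have hux : u x ≤ F x := h x ⟨hx.1.le, hx.2.le⟩
      have hexp : 0 < Real.exp (-α * x) := Real.exp_pos _
      have hkey : Real.exp (-α * x) * (α * u x) ≤ Real.exp (-α * x) * (α * F x) := by
        apply mul_le_mul_of_nonneg_left _ hexp.le
        exact mul_le_mul_of_nonneg_left hux hα.le
      show Real.exp (-α * x) * -α * F x + Real.exp (-α * x) * (α * u x) ≤ 0
      nlinarith [hkey]
  have hT0 : (0:ℝ) ∈ Icc 0 T := ⟨le_rfl, le_trans hτ.1 hτ.2⟩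
  have hG0 : G 0 = 0 := by simp [hGdef, hFdef]
  have hGτ : G τ ≤ 0 := by
    have := hGanti hT0 hτ hτ.1
    rwa [hG0] at this
  have hFτ : F τ ≤ 0 := by
    have hexp : 0 < Real.exp (-α * τ) := Real.exp_pos _
    have hGτ' : Real.exp (-α * τ) * F τ ≤ 0 := hGτ
    by_contra hc
    push_neg at hc
    nlinarith [mul_pos hexp hc]
  exact le_trans (h τ hτ) hFτ

/-- If continuous non-negative functions `Zᵥ` on `[0,T]` satisfy `Z₀(τ) ≤ Z̄ e^{ατ}` and the
recurrent inequality `Zᵥ(τ) ≤ ∫₀^τ [α Zᵥ(η) + β Z_{ν−1}(η)] dη` for `ν ≥ 1`, then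
`Zᵥ(τ) ≤ (βτ)^ν e^{ατ} / ν! ⋅ Z̄` for all `ν ≥ 1`. -/
theorem recurrent_inequality_bound (T : ℝ) (α β Zbar : ℝ) (hα : 0 < α) (hβ : 0 ≤ β)
    (hZbar : 0 ≤ Zbar) (Z : ℕ → ℝ → ℝ)
    (hcont : ∀ ν, ContinuousOn (Z ν) (Icc 0 T))
    (hnonneg : ∀ ν, ∀ τ ∈ Icc 0 T, 0 ≤ Z ν τ)
    (hZ0 : ∀ τ ∈ Icc 0 T, Z 0 τ ≤ Zbar * exp (α * τ))
    (hrec : ∀ ν : ℕ, 1 ≤ ν → ∀ τ ∈ Icc 0 T,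
      Z ν τ ≤ ∫ η in (0:ℝ)..τ, (α * Z ν η + β * Z (ν - 1) η)) :
    ∀ ν : ℕ, 1 ≤ ν → ∀ τ ∈ Icc 0 T,
      Z ν τ ≤ (β * τ) ^ ν * exp (α * τ) / (Nat.factorial ν) * Zbar := by
  have key : ∀ ν : ℕ, ∀ τ ∈ Icc 0 T,
      Z ν τ ≤ (β * τ) ^ ν * exp (α * τ) / (Nat.factorial ν) * Zbar := by
    intro ν
    induction ν with
    | zero =>
      intro τ hτ
      simpa [mul_comm] using hZ0 τ hτ
    | succ ν ih =>
      -- the candidate bound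
      set w : ℝ → ℝ := fun t =>
        (β * t) ^ (ν + 1) * exp (α * t) / (Nat.factorial (ν + 1)) * Zbar with hwdef
      set g : ℝ → ℝ := fun t =>
        β * ((β * t) ^ ν * exp (α * t) / (Nat.factorial ν) * Zbar) with hgdef
      have hfact : (0:ℝ) < (Nat.factorial (ν + 1) : ℝ) := by
        exact_mod_cast Nat.factorial_pos (ν + 1)
      have hfactν : (0:ℝ) < (Nat.factorial ν : ℝ) := by
        exact_mod_cast Nat.factorial_pos ν
      have hfactsucc : ((Nat.factorial (ν + 1) : ℝ)) = (ν + 1) * Nat.factorial ν := by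
        push_cast [Nat.factorial_succ]; ring
      have hwderiv : ∀ t : ℝ, HasDerivAt w (α * w t + g t) t := by
        intro t
        have h1 : HasDerivAt (fun y : ℝ => (β * y) ^ (ν + 1))
            ((ν + 1) * (β * t) ^ ν * β) t := by
          have hb : HasDerivAt (fun y : ℝ => β * y) β t := by
            simpa using (hasDerivAt_id t).const_mul β
          have := (hasDerivAt_pow (ν + 1) (β * t)).comp t hb
          simpa [mul_comm, mul_assoc, Function.comp_def] using this
        have h2 : HasDerivAt (fun y : ℝ => Real.exp (α * y)) (α * Real.exp (α * t)) t := by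
          have ha : HasDerivAt (fun y : ℝ => α * y) α t := by
            simpa using (hasDerivAt_id t).const_mul α
          have := (Real.hasDerivAt_exp (α * t)).comp t ha
          simpa [mul_comm, Function.comp_def] using this
        have h3 := ((h1.mul h2).div_const ((Nat.factorial (ν + 1) : ℝ))).mul_const Zbar
        refine h3.congr_deriv (Eq.symm ?_)
        simp only [hwdef, hgdef]
        field_simp
        rw [hfactsucc]
        ring
      have hwint : ∀ τ ∈ Icc 0 T, w τ = ∫ η in (0:ℝ)..τ, (α * w η + g η) := by
        intro τ hτ
        have hcontint : Continuous fun η => α * w η + g η := by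
          have hw : Continuous w := by
            apply Continuous.mul _ continuous_const
            apply Continuous.div_const
            exact ((continuous_const.mul continuous_id).pow _).mul
              (Real.continuous_exp.comp (continuous_const.mul continuous_id))
          have hg : Continuous g := by
            apply Continuous.mul continuous_const
            apply Continuous.mul _ continuous_const
            apply Continuous.div_const
            exact ((continuous_const.mul continuous_id).pow _).mul
              (Real.continuous_exp.comp (continuous_const.mul continuous_id))
          exact (continuous_const.mul hw).add hg
        have := intervalIntegral.integral_eq_sub_of_hasDerivAt
          (f := w) (f' := fun η => α * w η + g η) (a := 0) (b := τ)
          (fun x _ => hwderiv x) (hcontint.intervalIntegrable 0 τ)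
        have hw0 : w 0 = 0 := by simp [hwdef]
        rw [this, hw0, sub_zero]
      -- u = Z (ν+1) - w satisfies the Grönwall hypothesis
      set u : ℝ → ℝ := fun t => Z (ν + 1) t - w t with hudef
      have hucont : ContinuousOn u (Icc 0 T) := by
        apply (hcont (ν + 1)).sub
        apply Continuous.continuousOn
        apply Continuous.mul _ continuous_const
        apply Continuous.div_const
        exact ((continuous_const.mul continuous_id).pow _).mul
          (Real.continuous_exp.comp (continuous_const.mul continuous_id))
      have hu : ∀ τ ∈ Icc 0 T, u τ ≤ ∫ η in (0:ℝ)..τ, α * u η := by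
        intro τ hτ
        have hrec' := hrec (ν + 1) (Nat.le_add_left 1 ν) τ hτ
        simp only [Nat.add_sub_cancel] at hrec'
        have hsub : Icc (0:ℝ) τ ⊆ Icc 0 T := Icc_subset_Icc le_rfl hτ.2
        have hZν1c : ContinuousOn (Z (ν + 1)) (Icc 0 τ) := (hcont (ν + 1)).mono hsub
        have hZνc : ContinuousOn (Z ν) (Icc 0 τ) := (hcont ν).mono hsub
        have hwc : Continuous w := by
          apply Continuous.mul _ continuous_const
          apply Continuous.div_const
          exact ((continuous_const.mul continuous_id).pow _).mul
            (Real.continuous_exp.comp (continuous_const.mul continuous_id))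
        have hgc : Continuous g := by
          apply Continuous.mul continuous_const
          apply Continuous.mul _ continuous_const
          apply Continuous.div_const
          exact ((continuous_const.mul continuous_id).pow _).mul
            (Real.continuous_exp.comp (continuous_const.mul continuous_id))
        have huIcc : uIcc (0:ℝ) τ = Icc 0 τ := uIcc_of_le hτ.1
        have hint1 : IntervalIntegrable (fun η => α * Z (ν + 1) η + β * Z ν η) volume 0 τ := by
          apply ContinuousOn.intervalIntegrable
          rw [huIcc]
          exact (continuousOn_const.mul hZν1c).add (continuousOn_const.mul hZνc)
        have hint2 : IntervalIntegrable (fun η => α * u η) volume 0 τ := by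
          apply ContinuousOn.intervalIntegrable
          rw [huIcc]
          exact continuousOn_const.mul ((hZν1c).sub hwc.continuousOn)
        have hint3 : IntervalIntegrable (fun η => α * w η + g η) volume 0 τ :=
          ((continuous_const.mul hwc).add hgc).intervalIntegrable 0 τ
        have hmono : ∫ η in (0:ℝ)..τ, (α * Z (ν + 1) η + β * Z ν η)
            ≤ ∫ η in (0:ℝ)..τ, (α * u η + (α * w η + g η)) := by
          apply intervalIntegral.integral_mono_on hτ.1 hint1 (hint2.add hint3)
          intro x hx
          have hZx : Z ν x ≤ (β * x) ^ ν * exp (α * x) / (Nat.factorial ν) * Zbar :=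
            ih x (hsub hx)
          have : β * Z ν x ≤ g x := by
            simp only [hgdef]
            exact mul_le_mul_of_nonneg_left hZx hβ
          simp only [hudef]
          nlinarith
        calc u τ = Z (ν + 1) τ - w τ := rfl
          _ ≤ (∫ η in (0:ℝ)..τ, (α * Z (ν + 1) η + β * Z ν η)) - w τ := by linarith
          _ ≤ (∫ η in (0:ℝ)..τ, (α * u η + (α * w η + g η))) - w τ := by linarith
          _ = (∫ η in (0:ℝ)..τ, α * u η) + (∫ η in (0:ℝ)..τ, (α * w η + g η)) - w τ := by
              rw [intervalIntegral.integral_add hint2 hint3]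
          _ = ∫ η in (0:ℝ)..τ, α * u η := by rw [← hwint τ hτ]; ring
      intro τ hτ
      have := gronwall_zero T α hα u hucont hu τ hτ
      simp only [hudef, hwdef] at this
      linarith
  intro ν _ τ hτ
  exact key ν τ hτ
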